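/- Let 0 < λ < μ and ν > 0, set r = ν/λ and define π_n = (Γ(n+r)/(n!·Γ(r)))·(λ/μ)^n·(1 − λ/μ)^r for n = 0, 1, 2, …. Then these numbers satisfy the stationarity equations of the BDI process: 0 = −ν·π₀ + μ·π₁, and for every n ≥ 1, 0 = ((n−1)·λ + ν)·π_{n−1} − (n·(λ+μ) + ν)·π_n + (n+1)·μ·π_{n+1}. -/

import Mathlib

/-- With `0 < λ < μ`, `ν > 0`, `r = ν/λ`, the negative binomial numbers
`π_n = (Γ(n+r)/(n!·Γ(r)))·(λ/μ)^n·(1 − λ/μ)^r` satisfy the stationarity equations of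
the BDI process. -/
theorem stmt_5 (lam mu nu r : ℝ) (hlam : 0 < lam) (hlm : lam < mu) (hnu : 0 < nu)
    (hr : r = nu / lam) (pi : ℕ → ℝ)
    (hpi : ∀ n : ℕ, pi n =
      Real.Gamma (n + r) / (n.factorial * Real.Gamma r) * (lam / mu) ^ n *
        (1 - lam / mu) ^ r) :
    0 = -nu * pi 0 + mu * pi 1 ∧
    ∀ n : ℕ, 1 ≤ n →
      0 = (((n : ℝ) - 1) * lam + nu) * pi (n - 1)
          - ((n : ℝ) * (lam + mu) + nu) * pi n
          + ((n : ℝ) + 1) * mu * pi (n + 1) := by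
  have hmu : 0 < mu := hlam.trans hlm
  have hrpos : 0 < r := by rw [hr]; positivity
  have hrl : r * lam = nu := by rw [hr]; field_simp
  have key : ∀ n : ℕ, ((n : ℝ) + 1) * mu * pi (n + 1) = ((n : ℝ) * lam + nu) * pi n := by
    intro n
    have hnr : (n : ℝ) + r ≠ 0 := by positivity
    have hG : Real.Gamma ((n : ℝ) + 1 + r) = ((n : ℝ) + r) * Real.Gamma ((n : ℝ) + r) := by
      have := Real.Gamma_add_one hnr
      rw [show (n : ℝ) + 1 + r = (n : ℝ) + r + 1 by ring, this]
    rw [hpi (n + 1), hpi n]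
    push_cast [Nat.factorial_succ, hG]
    have h1 : ((n : ℝ) * lam + nu) = ((n : ℝ) + r) * lam := by rw [← hrl]; ring
    rw [h1]
    field_simp
    ring_nf
    have hm : mu * mu⁻¹ = 1 := mul_inv_cancel₀ hmu.ne'
    calc _ = (mu * mu⁻¹) * (lam * lam ^ n * mu⁻¹ ^ n * (mu * mu⁻¹ - lam * mu⁻¹) ^ r) := by ring
      _ = _ := by rw [hm, one_mul]
  constructor
  · have h0 := key 0
    simp at h0
    linarith [h0]
  · intro n hn
    obtain ⟨m, rfl⟩ := Nat.exists_eq_add_of_le hn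
    have h1 := key m
    have h2 := key (m + 1)
    push_cast at h1 h2 ⊢
    rw [show 1 + m - 1 = m by omega, show 1 + m = m + 1 by omega]
    nlinarith [h1, h2]
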